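/- Let X = ℤ^v with c_u-adjacency, 1 ≤ u ≤ v. Then for any m,n ∈ ℕ and any finite nonempty A ⊆ X, (X,c_u) is not (A,m,n)-limited: there exists f ∈ C(X,c_u) such that f|_A is an m-map but f is not an n-map. -/

import Mathlib

/-- A function between digital images (graphs) is digitally continuous if adjacent
points map to equal or adjacent points. -/
def DigContinuous {V W : Type*} (G : SimpleGraph V) (H : SimpleGraph W) (f : V → W) : Prop :=
  ∀ x y : V, G.Adj x y → f x = f y ∨ H.Adj (f x) (f y)

/-- `f` restricted to `A` is an `m`-map: it moves each point of `A` a graph distance of at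
most `m`. -/
def IsMMapOn {V : Type*} (G : SimpleGraph V) (f : V → V) (A : Set V) (m : ℕ) : Prop :=
  ∀ a ∈ A, G.dist a (f a) ≤ m

/-- `A` is an `(m,n)`-limiting set for `(X,κ)`: every continuous self-map whose restriction
to `A` is an `m`-map is an `n`-map. -/
def IsLimiting {V : Type*} (G : SimpleGraph V) (A : Set V) (m n : ℕ) : Prop :=
  ∀ f : V → V, DigContinuous G G f → IsMMapOn G f A m → IsMMapOn G f Set.univ n

/-- `A` is a minimal `(m,n)`-limiting set: it is limiting and no proper subset is. -/
def IsMinimalLimiting {V : Type*} (G : SimpleGraph V) (A : Set V) (m n : ℕ) : Prop :=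
  IsLimiting G A m n ∧ ∀ B : Set V, B ⊂ A → ¬ IsLimiting G B m n

/-- `ℤ^v` with `c_u`-adjacency: distinct points are adjacent iff each coordinate differs
by at most 1 and at most `u` coordinates differ. -/
def cuGraph (u v : ℕ) : SimpleGraph (Fin v → ℤ) where
  Adj x y := x ≠ y ∧ (∀ i, |x i - y i| ≤ 1) ∧ {i | x i ≠ y i}.ncard ≤ u
  symm := by
    constructor
    rintro x y ⟨h1, h2, h3⟩
    refine ⟨h1.symm, fun i => by rw [abs_sub_comm]; exact h2 i, ?_⟩
    have : {i | y i ≠ x i} = {i | x i ≠ y i} := Set.ext fun i => ne_comm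
    rw [this]
    exact h3
  loopless := by
    constructor
    rintro x ⟨hne, -⟩
    exact hne rfl

-- lower bound: any walk has length ≥ coordinate gap
lemma walk_len_lb (u v : ℕ) (i0 : Fin v) {x y : Fin v → ℤ}
    (p : (cuGraph u v).Walk x y) : (x i0 - y i0).natAbs ≤ p.length := by
  induction p with
  | nil => simp
  | cons h p ih =>
    rename_i a b c
    obtain ⟨-, h2, -⟩ := id h
    have := h2 i0
    rw [abs_le] at this
    simp only [SimpleGraph.Walk.length_cons]
    omega

lemma reach_update (u v : ℕ) (hu : 1 ≤ u) (i0 : Fin v) (k : ℕ) (y : Fin v → ℤ) :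
    (cuGraph u v).Reachable (Function.update y i0 (y i0 + k)) y := by
  induction k with
  | zero =>
    have : Function.update y i0 (y i0 + ((0:ℕ):ℤ)) = y := by simp
    rw [this]
  | succ k ih =>
    refine (SimpleGraph.Adj.reachable ?_).trans ih
    refine ⟨?_, ?_, ?_⟩
    · intro h
      have := congrFun h i0
      simp only [Function.update_self] at this
      omega
    · intro i
      by_cases hi : i = i0
      · subst hi
        simp only [Function.update_self]
        rw [abs_le]
        push_cast
        omega
      · simp [Function.update_of_ne hi]
    · have hsub : {i | Function.update y i0 (y i0 + (k+1:ℕ)) i ≠ Function.update y i0 (y i0 + (k:ℕ)) i} ⊆ {i0} := by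
        intro i hi
        by_contra hne
        simp only [Set.mem_singleton_iff] at hne
        exact hi (by simp [Function.update_of_ne hne])
      calc _ ≤ ({i0} : Set (Fin v)).ncard := Set.ncard_le_ncard hsub (Set.finite_singleton _)
        _ = 1 := Set.ncard_singleton _
        _ ≤ u := hu

theorem stmt18 (u v : ℕ) (hu : 1 ≤ u) (huv : u ≤ v) (m n : ℕ)
    (A : Set (Fin v → ℤ)) (hfin : A.Finite) (hne : A.Nonempty) :
    ¬ IsLimiting (cuGraph u v) A m n ∧
    ∃ f : (Fin v → ℤ) → (Fin v → ℤ),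
      DigContinuous (cuGraph u v) (cuGraph u v) f ∧
      IsMMapOn (cuGraph u v) f A m ∧
      ¬ IsMMapOn (cuGraph u v) f Set.univ n := by
  have hv : 0 < v := lt_of_lt_of_le hu huv
  set i0 : Fin v := ⟨0, hv⟩ with hi0
  obtain ⟨M, hM⟩ : ∃ M : ℤ, ∀ a ∈ A, a i0 ≤ M := by
    obtain ⟨M, hM⟩ := (hfin.image (fun a => a i0)).bddAbove
    exact ⟨M, fun a ha => hM ⟨a, ha, rfl⟩⟩
  set f : (Fin v → ℤ) → (Fin v → ℤ) :=
    fun x => Function.update x i0 (min (x i0) M) with hf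
  have hcont : DigContinuous (cuGraph u v) (cuGraph u v) f := by
    intro x y hxy
    obtain ⟨h1, h2, h3⟩ := hxy
    by_cases heq : f x = f y
    · exact Or.inl heq
    refine Or.inr ⟨heq, ?_, ?_⟩
    · intro i
      by_cases hi : i = i0
      · subst hi
        have := h2 i0
        rw [abs_le] at this ⊢
        simp only [hf, Function.update_self]
        omega
      · simp only [hf, Function.update_of_ne hi]
        exact h2 i
    · have hsub : {i | f x i ≠ f y i} ⊆ {i | x i ≠ y i} := by
        intro i hi
        by_cases hii : i = i0
        · subst hii
          intro hxyeq
          exact hi (by simp [hf, Function.update_self, hxyeq])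
        · intro hxyeq
          exact hi (by simp [hf, Function.update_of_ne hii, hxyeq])
      exact le_trans (Set.ncard_le_ncard hsub (Set.toFinite _)) h3
  have hfix : ∀ a ∈ A, f a = a := by
    intro a ha
    simp only [hf]
    rw [min_eq_left (hM a ha)]
    exact Function.update_eq_self _ _
  have hmmap : IsMMapOn (cuGraph u v) f A m := by
    intro a ha
    rw [hfix a ha, SimpleGraph.dist_self]
    exact Nat.zero_le m
  have hnot : ¬ IsMMapOn (cuGraph u v) f Set.univ n := by
    intro h
    set x : Fin v → ℤ := Function.update (fun _ => 0) i0 (M + n + 1) with hx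
    have hxval : x i0 = M + n + 1 := by simp [hx]
    have hmin : min (x i0) M = M := by rw [hxval]; omega
    have hfx : f x = Function.update x i0 M := by
      simp only [hf, hmin]
    have hfxval : f x i0 = M := by rw [hfx]; simp
    -- reachability
    have hreach : (cuGraph u v).Reachable x (f x) := by
      have := reach_update u v hu i0 (n+1) (f x)
      have he : Function.update (f x) i0 (f x i0 + ((n+1 : ℕ) : ℤ)) = x := by
        rw [hfxval, hfx, Function.update_idem, hx, Function.update_idem]
        congr 1
        push_cast; ring
      rwa [he] at this
    obtain ⟨p, hp⟩ := hreach.exists_walk_length_eq_dist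
    have hlb := walk_len_lb u v i0 p
    have : (x i0 - f x i0).natAbs = n + 1 := by rw [hxval, hfxval]; omega
    have hd := h x (Set.mem_univ x)
    omega
  exact ⟨fun hl => hnot (hl f hcont hmmap), f, hcont, hmmap, hnot⟩
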